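/- For every n ≥ 1, the number of derangements of {1,…,n} equals the number of permutations σ of {1,…,n} whose first descent position is even, i.e., the least i with σ(i) > σ(i+1) is even (permutations with no descent, namely the identity, are counted as having first descent n if n is even, i.e., the identity is counted iff n is even). -/

import Mathlib

open Equiv Finset Nat

/-- The value `σ(j+1)` of a permutation of `{1,…,n}`, written with 0-based index `j`
(junk value `0` out of range). -/
def permVal (n : ℕ) (σ : Equiv.Perm (Fin n)) (j : ℕ) : ℕ :=
  if h : j < n then (σ ⟨j, h⟩ : ℕ) else 0

/-- The set of descents of `σ`: indices `i ∈ {1,…,n−1}` with `σ(i) > σ(i+1)`. -/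
def descentSet (n : ℕ) (σ : Equiv.Perm (Fin n)) : Finset ℕ :=
  (Finset.Icc 1 (n - 1)).filter fun i => permVal n σ i < permVal n σ (i - 1)

/-- The first descent of `σ`, with the convention that a permutation with no
descent has first descent `n`. -/
def firstDescent (n : ℕ) (σ : Equiv.Perm (Fin n)) : ℕ :=
  if h : (descentSet n σ).Nonempty then (descentSet n σ).min' h else n

/-- σ is strictly increasing on the first `k` (0-based) positions. -/
def Inc (n k : ℕ) (σ : Equiv.Perm (Fin n)) : Prop :=
  ∀ i j : Fin n, (i : ℕ) < (j : ℕ) → (j : ℕ) < k → σ i < σ j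

def finKEquiv {n k : ℕ} (hk : k ≤ n) : Fin k ≃ {i : Fin n // (i : ℕ) < k} where
  toFun j := ⟨⟨j.1, lt_of_lt_of_le j.2 hk⟩, j.2⟩
  invFun x := ⟨x.1.1, x.2⟩
  left_inv j := rfl
  right_inv x := rfl

noncomputable def extK {n k : ℕ} (hk : k ≤ n) : Perm (Fin k) →* Perm (Fin n) :=
  Equiv.Perm.extendDomainHom (finKEquiv hk)

lemma extK_apply_lt {n k : ℕ} (hk : k ≤ n) (π : Perm (Fin k)) (i : Fin n) (h : (i : ℕ) < k) :
    extK hk π i = ⟨(π ⟨i.1, h⟩ : Fin k).1, lt_of_lt_of_le (π ⟨i.1, h⟩).2 hk⟩ := by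
  have := Equiv.Perm.extendDomain_apply_subtype π (finKEquiv hk) (b := i) h
  simpa [extK, finKEquiv, Equiv.Perm.extendDomainHom] using this

lemma extK_apply_ge {n k : ℕ} (hk : k ≤ n) (π : Perm (Fin k)) (i : Fin n) (h : ¬ (i : ℕ) < k) :
    extK hk π i = i :=
  Equiv.Perm.extendDomain_apply_not_subtype π (finKEquiv hk) h

lemma extK_apply_mk {n k : ℕ} (hk : k ≤ n) (π : Perm (Fin k)) (j : Fin k) :
    extK hk π ⟨j.1, lt_of_lt_of_le j.2 hk⟩ = ⟨(π j).1, lt_of_lt_of_le (π j).2 hk⟩ := by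
  rw [extK_apply_lt hk π _ j.2]

lemma strictMono_of_inc {n k : ℕ} (hk : k ≤ n) {σ : Perm (Fin n)} (hσ : Inc n k σ) :
    StrictMono (fun j : Fin k => σ ⟨j.1, lt_of_lt_of_le j.2 hk⟩) := by
  intro a b hab
  exact hσ _ _ hab (b.2)

lemma cardInc (n k : ℕ) (hk : k ≤ n) :
    Nat.card {σ : Perm (Fin n) // Inc n k σ} * k ! = n ! := by
  classical
  set Φ : {σ : Perm (Fin n) // Inc n k σ} × Perm (Fin k) → Perm (Fin n) :=
    fun p => p.1.1 * extK hk p.2 with hΦdef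
  have hinj : Function.Injective Φ := by
    rintro ⟨⟨σ₁, hσ₁⟩, π₁⟩ ⟨⟨σ₂, hσ₂⟩, π₂⟩ h
    simp only [hΦdef] at h
    -- σ₁ = σ₂ ∘ extK τ
    have hτ : σ₁ = σ₂ * extK hk (π₂ * π₁⁻¹) := by
      have := congrArg (· * (extK hk π₁)⁻¹) h
      simpa [mul_assoc, map_mul, map_inv] using this
    set g₁ : Fin k → Fin n := fun j => σ₁ ⟨j.1, lt_of_lt_of_le j.2 hk⟩ with hg₁
    set g₂ : Fin k → Fin n := fun j => σ₂ ⟨j.1, lt_of_lt_of_le j.2 hk⟩ with hg₂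
    have hm₁ : StrictMono g₁ := strictMono_of_inc hk hσ₁
    have hm₂ : StrictMono g₂ := strictMono_of_inc hk hσ₂
    have hcomp : ∀ j : Fin k, g₁ j = g₂ ((π₂ * π₁⁻¹) j) := by
      intro j
      have : σ₁ ⟨j.1, lt_of_lt_of_le j.2 hk⟩
          = σ₂ (extK hk (π₂ * π₁⁻¹) ⟨j.1, lt_of_lt_of_le j.2 hk⟩) := by
        rw [hτ]; rfl
      show σ₁ ⟨j.1, lt_of_lt_of_le j.2 hk⟩
          = σ₂ ⟨((π₂ * π₁⁻¹) j).1, lt_of_lt_of_le ((π₂ * π₁⁻¹) j).2 hk⟩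
      rw [this, extK_apply_lt hk (π₂ * π₁⁻¹) ⟨j.1, lt_of_lt_of_le j.2 hk⟩ j.2]
    have himg : Finset.image g₁ Finset.univ = Finset.image g₂ Finset.univ := by
      apply Finset.eq_of_subset_of_card_le
      · intro x hx
        rcases Finset.mem_image.1 hx with ⟨j, -, rfl⟩
        exact Finset.mem_image.2 ⟨_, Finset.mem_univ _, (hcomp j).symm⟩
      · rw [Finset.card_image_of_injective _ hm₂.injective,
          Finset.card_image_of_injective _ hm₁.injective]
    have hcard : (Finset.image g₂ Finset.univ).card = k := by
      rw [Finset.card_image_of_injective _ hm₂.injective, Finset.card_univ, Fintype.card_fin]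
    have hu₁ : g₁ = (Finset.image g₂ Finset.univ).orderEmbOfFin hcard := by
      apply Finset.orderEmbOfFin_unique hcard _ hm₁
      intro x; rw [← himg]; exact Finset.mem_image_of_mem _ (Finset.mem_univ x)
    have hu₂ : g₂ = (Finset.image g₂ Finset.univ).orderEmbOfFin hcard := by
      apply Finset.orderEmbOfFin_unique hcard _ hm₂
      intro x; exact Finset.mem_image_of_mem _ (Finset.mem_univ x)
    have hg : g₁ = g₂ := hu₁.trans hu₂.symm
    have hσ : σ₁ = σ₂ := by
      ext i
      by_cases hi : (i : ℕ) < k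
      · have := congrFun hg ⟨i.1, hi⟩
        simpa [hg₁, hg₂] using congrArg Fin.val this
      · have h1 : σ₁ i = σ₂ (extK hk (π₂ * π₁⁻¹) i) := by rw [hτ]; rfl
        rw [extK_apply_ge hk _ _ hi] at h1
        exact congrArg Fin.val h1
    have hπ : π₁ = π₂ := by
      have hE : extK hk π₁ = extK hk π₂ := by
        have := h; rw [hσ] at this
        exact mul_left_cancel this
      ext j
      have hEv := congrArg (fun (e : Perm (Fin n)) => e ⟨j.1, lt_of_lt_of_le j.2 hk⟩) hE
      simp only [extK_apply_mk hk] at hEv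
      have hv := congrArg Fin.val hEv
      exact hv
    simp [hσ, hπ]
  have hsurj : Function.Surjective Φ := by
    intro ρ
    set g : Fin k → Fin n := fun j => ρ ⟨j.1, lt_of_lt_of_le j.2 hk⟩ with hg
    have hginj : Function.Injective g := by
      intro a b hab
      have h2 := congrArg Fin.val (ρ.injective hab)
      exact Fin.ext h2
    have hmono : Monotone (g ∘ Tuple.sort g) := Tuple.monotone_sort g
    have hsm : StrictMono (g ∘ Tuple.sort g) :=
      hmono.strictMono_of_injective (hginj.comp (Tuple.sort g).injective)
    refine ⟨⟨⟨ρ * extK hk (Tuple.sort g), ?_⟩, (Tuple.sort g)⁻¹⟩, ?_⟩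
    · intro i j hij hjk
      have hik : (i : ℕ) < k := lt_trans hij hjk
      have hi : (ρ * extK hk (Tuple.sort g)) i = (g ∘ Tuple.sort g) ⟨i.1, hik⟩ := by
        rw [Perm.mul_apply, extK_apply_lt hk _ i hik]; rfl
      have hj : (ρ * extK hk (Tuple.sort g)) j = (g ∘ Tuple.sort g) ⟨j.1, hjk⟩ := by
        rw [Perm.mul_apply, extK_apply_lt hk _ j hjk]; rfl
      rw [hi, hj]
      exact hsm (show (⟨i.1, hik⟩ : Fin k) < ⟨j.1, hjk⟩ from hij)
    · simp only [hΦdef, mul_assoc, ← map_mul, mul_inv_cancel, map_one, mul_one]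
  have hcardeq : Nat.card ({σ : Perm (Fin n) // Inc n k σ} × Perm (Fin k))
      = Nat.card (Perm (Fin n)) := Nat.card_congr (Equiv.ofBijective Φ ⟨hinj, hsurj⟩)
  rw [Nat.card_prod] at hcardeq
  simp only [Nat.card_eq_fintype_card, Fintype.card_perm, Fintype.card_fin] at hcardeq ⊢
  exact hcardeq

lemma permVal_eq {n : ℕ} (σ : Equiv.Perm (Fin n)) {i : ℕ} (h : i < n) :
    permVal n σ i = σ ⟨i, h⟩ := dif_pos h

lemma mem_Icc_of_mem_descentSet {n : ℕ} {σ : Equiv.Perm (Fin n)} {i : ℕ}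
    (h : i ∈ descentSet n σ) : i ∈ Finset.Icc 1 (n - 1) := (Finset.mem_filter.1 h).1

lemma one_le_firstDescent (n : ℕ) (hn : 1 ≤ n) (σ : Equiv.Perm (Fin n)) :
    1 ≤ firstDescent n σ := by
  unfold firstDescent
  split
  · next h =>
    have := mem_Icc_of_mem_descentSet (Finset.min'_mem _ h)
    exact (Finset.mem_Icc.1 this).1
  · exact hn

lemma firstDescent_le (n : ℕ) (σ : Equiv.Perm (Fin n)) : firstDescent n σ ≤ n := by
  unfold firstDescent
  split
  · next h =>
    have := mem_Icc_of_mem_descentSet (Finset.min'_mem _ h)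
    have h2 := (Finset.mem_Icc.1 this).2
    omega
  · exact le_refl n

lemma notmem_descentSet_iff {n : ℕ} (σ : Equiv.Perm (Fin n)) {i : ℕ} (h1 : 1 ≤ i) (h2 : i < n) :
    i ∉ descentSet n σ ↔ permVal n σ (i - 1) < permVal n σ i := by
  have hin' : i - 1 < n := lt_of_le_of_lt (Nat.sub_le i 1) h2
  have hi : i ∈ Finset.Icc 1 (n - 1) := Finset.mem_Icc.2 ⟨h1, by omega⟩
  rw [descentSet, Finset.mem_filter, permVal_eq σ h2, permVal_eq σ hin']
  have hne : (σ ⟨i - 1, hin'⟩ : ℕ) ≠ (σ ⟨i, h2⟩ : ℕ) := by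
    intro hEq
    have h3 : (⟨i - 1, hin'⟩ : Fin n) = ⟨i, h2⟩ := σ.injective (Fin.ext hEq)
    have h4 := congrArg Fin.val h3
    simp only at h4
    omega
  constructor
  · intro hmem
    have : ¬ ((σ ⟨i, h2⟩ : ℕ) < (σ ⟨i - 1, hin'⟩ : ℕ)) := fun hlt => hmem ⟨hi, hlt⟩
    omega
  · intro hlt hmem
    have := hmem.2
    omega

lemma le_firstDescent_iff_notmem {n k : ℕ} (σ : Equiv.Perm (Fin n)) (hkn : k ≤ n) :
    k ≤ firstDescent n σ ↔ ∀ i, 1 ≤ i → i < k → i ∉ descentSet n σ := by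
  unfold firstDescent
  split
  · next h =>
    rw [Finset.le_min'_iff]
    constructor
    · intro H i hi1 hik hmem
      have := H i hmem
      omega
    · intro H m hm
      by_contra hc
      push_neg at hc
      have h1 : 1 ≤ m := (Finset.mem_Icc.1 (mem_Icc_of_mem_descentSet hm)).1
      exact H m h1 hc hm
  · next h =>
    constructor
    · intro _ i _ _ hmem
      exact h ⟨i, hmem⟩
    · intro _
      exact hkn

lemma le_firstDescent_iff_inc {n k : ℕ} (σ : Equiv.Perm (Fin n)) (hk1 : 1 ≤ k) (hkn : k ≤ n) :
    k ≤ firstDescent n σ ↔ Inc n k σ := by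
  rw [le_firstDescent_iff_notmem σ hkn]
  constructor
  · intro H
    have hstep : ∀ m : ℕ, 1 ≤ m → m < k → ∀ (hm : m < n) (hm' : m - 1 < n),
        σ ⟨m - 1, hm'⟩ < σ ⟨m, hm⟩ := by
      intro m h1 h2 hm hm'
      have := (notmem_descentSet_iff σ h1 hm).1 (H m h1 h2)
      rw [permVal_eq σ hm, permVal_eq σ hm'] at this
      exact this
    have key : ∀ j : ℕ, j < k → ∀ i : ℕ, i < j →
        ∀ (hi : i < n) (hj : j < n), σ ⟨i, hi⟩ < σ ⟨j, hj⟩ := by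
      intro j
      induction j with
      | zero => omega
      | succ m ih =>
        intro hjk i hij hi hj
        have hmn : m < n := by omega
        have hstep' : σ ⟨m, hmn⟩ < σ ⟨m + 1, hj⟩ := by
          have := hstep (m + 1) (by omega) hjk hj (by omega)
          simpa using this
        rcases Nat.lt_or_ge i m with hlt | hge
        · exact lt_trans (ih (by omega) i hlt hi hmn) hstep'
        · have : i = m := by omega
          subst this
          exact hstep'
    intro i j hij hjk
    have := key j.1 hjk i.1 hij i.2 j.2
    simpa using this
  · intro H i h1 h2 hmem
    have hin : i < n := by omega
    have hin' : i - 1 < n := by omega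
    apply (notmem_descentSet_iff σ h1 hin).2 _ hmem
    rw [permVal_eq σ hin, permVal_eq σ hin']
    have := H ⟨i - 1, hin'⟩ ⟨i, hin⟩ (by simp; omega) (by simpa using h2)
    rw [Fin.lt_def] at this
    exact this

lemma telescope (F : ℕ → ℤ) (N : ℕ) (hN : 1 ≤ N) :
    (∑ m ∈ Finset.Icc 1 N, if Even m then F m - F (m + 1) else 0)
      = (∑ j ∈ Finset.Icc 2 N, (-1 : ℤ) ^ j * F j) - (if Even N then F (N + 1) else 0) := by
  induction N, hN using Nat.le_induction with
  | base => simp [Finset.Icc_self, Nat.even_iff]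
  | succ M hM1 ih =>
    rw [Finset.sum_Icc_succ_top (by omega : 1 ≤ M + 1), ih,
      Finset.sum_Icc_succ_top (by omega : 2 ≤ M + 1)]
    rcases Nat.even_or_odd M with hE | hO
    · have h1 : ¬ Even (M + 1) := by simp [Nat.even_add_one, hE]
      have h2 : (-1 : ℤ) ^ (M + 1) = -1 := Odd.neg_one_pow (Even.add_one hE)
      simp only [if_pos hE, if_neg h1]
      rw [h2]; ring
    · have h1 : Even (M + 1) := Odd.add_one hO
      have h2 : (-1 : ℤ) ^ (M + 1) = 1 := Even.neg_one_pow h1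
      have h3 : ¬ Even M := (Nat.not_even_iff_odd.mpr hO)
      simp only [if_pos h1, if_neg h3]
      rw [h2]; ring


lemma derangements_sum_icc (n : ℕ) (hn : 1 ≤ n) :
    (numDerangements n : ℤ)
      = ∑ j ∈ Finset.Icc 2 n, (-1 : ℤ) ^ j * (Nat.ascFactorial (j + 1) (n - j) : ℤ) := by
  rw [numDerangements_sum]
  have hsplit : ∑ k ∈ Finset.range (n + 1), (-1 : ℤ) ^ k * (Nat.ascFactorial (k + 1) (n - k) : ℤ)
      = (∑ k ∈ Finset.range 2, (-1 : ℤ) ^ k * (Nat.ascFactorial (k + 1) (n - k) : ℤ))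
        + ∑ k ∈ Finset.Ico 2 (n + 1), (-1 : ℤ) ^ k * (Nat.ascFactorial (k + 1) (n - k) : ℤ) := by
    rw [Finset.range_eq_Ico]
    exact (Finset.sum_Ico_consecutive _ (m := 0) (n := 2) (k := n + 1) (by omega) (by omega)).symm
  have h0 : (∑ k ∈ Finset.range 2, (-1 : ℤ) ^ k * (Nat.ascFactorial (k + 1) (n - k) : ℤ)) = 0 := by
    rw [Finset.sum_range_succ, Finset.sum_range_one]
    have e0 : Nat.ascFactorial 1 n = n ! := Nat.one_ascFactorial n
    have e1 : Nat.ascFactorial 2 (n - 1) = n ! := by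
      have := Nat.factorial_mul_ascFactorial 1 (n - 1)
      simp only [Nat.factorial_one, one_mul] at this
      rw [this]
      congr 1
      omega
    simp [e0, e1]
  rw [hsplit, h0, zero_add, Finset.Ico_add_one_right_eq_Icc]

/-- The number of derangements of `{1,…,n}` equals the number of permutations of
`{1,…,n}` whose first descent is even. -/
theorem stmt_2 (n : ℕ) (hn : 1 ≤ n) :
    Nat.card {σ : Equiv.Perm (Fin n) // ∀ i, σ i ≠ i} =
      Nat.card {σ : Equiv.Perm (Fin n) // Even (firstDescent n σ)} := by
  classical
  -- left side
  have hL : Nat.card {σ : Equiv.Perm (Fin n) // ∀ i, σ i ≠ i} = numDerangements n := by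
    calc Nat.card {σ : Equiv.Perm (Fin n) // ∀ i, σ i ≠ i}
        = Nat.card (derangements (Fin n)) :=
          Nat.card_congr (Equiv.subtypeEquivRight fun σ => Iff.rfl)
      _ = numDerangements n := by
          rw [Nat.card_eq_fintype_card]
          simpa [Fintype.card_fin] using card_derangements_eq_numDerangements (Fin n)
  set f : ℕ → ℕ := fun k =>
    ((Finset.univ : Finset (Perm (Fin n))).filter fun σ => k ≤ firstDescent n σ).card with hf
  have hfk : ∀ k, 1 ≤ k → k ≤ n → f k * k ! = n ! := by
    intro k h1 h2
    have e1 : Nat.card {σ : Perm (Fin n) // k ≤ firstDescent n σ} = f k := by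
      rw [Nat.card_eq_fintype_card, Fintype.card_subtype]
    have e2 : Nat.card {σ : Perm (Fin n) // k ≤ firstDescent n σ}
        = Nat.card {σ : Perm (Fin n) // Inc n k σ} :=
      Nat.card_congr (Equiv.subtypeEquivRight fun σ => le_firstDescent_iff_inc σ h1 h2)
    rw [← e1, e2]
    exact cardInc n k h2
  have hftop : f (n + 1) = 0 := by
    rw [hf]
    simp only [Finset.card_eq_zero]
    apply Finset.filter_eq_empty_iff.2
    intro σ _
    have := firstDescent_le n σ
    omega
  -- right side as a filter card
  have hR : Nat.card {σ : Equiv.Perm (Fin n) // Even (firstDescent n σ)}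
      = ((Finset.univ : Finset (Perm (Fin n))).filter fun σ => Even (firstDescent n σ)).card := by
    rw [Nat.card_eq_fintype_card, Fintype.card_subtype]
  set E : ℕ :=
    ((Finset.univ : Finset (Perm (Fin n))).filter fun σ => Even (firstDescent n σ)).card with hE
  -- fiberwise decomposition
  have hfib : E = ∑ m ∈ Finset.Icc 1 n,
      (((Finset.univ : Finset (Perm (Fin n))).filter fun σ => Even (firstDescent n σ)).filter
        fun σ => firstDescent n σ = m).card := by
    rw [hE]
    apply Finset.card_eq_sum_card_fiberwise
    intro σ _
    exact Finset.mem_Icc.2 ⟨one_le_firstDescent n hn σ, firstDescent_le n σ⟩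
  have hfil : ∀ m : ℕ,
      (((Finset.univ : Finset (Perm (Fin n))).filter fun σ => Even (firstDescent n σ)).filter
        fun σ => firstDescent n σ = m).card
      = if Even m then
          ((Finset.univ : Finset (Perm (Fin n))).filter fun σ => firstDescent n σ = m).card
        else 0 := by
    intro m
    by_cases hm : Even m
    · rw [if_pos hm]
      congr 1
      rw [Finset.filter_filter]
      apply Finset.filter_congr
      intro σ _
      constructor
      · rintro ⟨-, h⟩; exact h
      · intro h; exact ⟨h ▸ hm, h⟩
    · rw [if_neg hm, Finset.card_eq_zero]
      apply Finset.filter_eq_empty_iff.2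
      rintro σ hσ rfl
      exact hm (Finset.mem_filter.1 hσ).2
  have hg : ∀ m : ℕ,
      ((((Finset.univ : Finset (Perm (Fin n))).filter fun σ => firstDescent n σ = m).card : ℤ))
        = (f m : ℤ) - (f (m + 1) : ℤ) := by
    intro m
    have hsub : ((Finset.univ : Finset (Perm (Fin n))).filter fun σ => m + 1 ≤ firstDescent n σ)
        ⊆ ((Finset.univ : Finset (Perm (Fin n))).filter fun σ => m ≤ firstDescent n σ) := by
      intro σ hσ
      simp only [Finset.mem_filter] at hσ ⊢
      exact ⟨hσ.1, by omega⟩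
    have hsdiff : ((Finset.univ : Finset (Perm (Fin n))).filter fun σ => firstDescent n σ = m)
        = ((Finset.univ : Finset (Perm (Fin n))).filter fun σ => m ≤ firstDescent n σ)
          \ ((Finset.univ : Finset (Perm (Fin n))).filter fun σ => m + 1 ≤ firstDescent n σ) := by
      ext σ
      simp only [Finset.mem_filter, Finset.mem_sdiff, Finset.mem_univ, true_and]
      omega
    rw [hsdiff, Finset.card_sdiff_of_subset hsub, hf]
    have hle := Finset.card_le_card hsub
    push_cast [Nat.cast_sub hle]
    ring
  -- put it together over ℤ
  have hEsum : (E : ℤ) = ∑ m ∈ Finset.Icc 1 n,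
      (if Even m then (f m : ℤ) - (f (m + 1) : ℤ) else 0) := by
    rw [hfib]
    push_cast
    apply Finset.sum_congr rfl
    intro m _
    rw [hfil m]
    by_cases hm : Even m
    · rw [if_pos hm, if_pos hm, hg m]
    · rw [if_neg hm, if_neg hm]; norm_num
  have hEtel : (E : ℤ) = ∑ j ∈ Finset.Icc 2 n, (-1 : ℤ) ^ j * (f j : ℤ) := by
    rw [hEsum, telescope (fun m => (f m : ℤ)) n hn]
    rw [hftop]
    simp
  have hterm : ∀ j ∈ Finset.Icc 2 n,
      (-1 : ℤ) ^ j * (Nat.ascFactorial (j + 1) (n - j) : ℤ) = (-1 : ℤ) ^ j * (f j : ℤ) := by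
    intro j hj
    rw [Finset.mem_Icc] at hj
    have hasc : Nat.ascFactorial (j + 1) (n - j) * j ! = n ! := by
      have := Nat.factorial_mul_ascFactorial j (n - j)
      rw [Nat.mul_comm] at this
      rw [this]
      congr 1
      omega
    have hffact := hfk j (by omega) hj.2
    have : Nat.ascFactorial (j + 1) (n - j) = f j :=
      Nat.eq_of_mul_eq_mul_right (Nat.factorial_pos j) (hasc.trans hffact.symm)
    rw [this]
  have hfinal : (numDerangements n : ℤ) = (E : ℤ) := by
    rw [derangements_sum_icc n hn, hEtel]
    exact Finset.sum_congr rfl hterm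
  rw [hL, hR]
  exact_mod_cast hfinal
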